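/- Subformula property of the Wajsberg algorithm: every formula occurring in any judgement produced during a run of the Wajsberg proof-search procedure started on Γ ⊢ φ is a subformula of a formula occurring in the initial judgement (i.e., of φ or of some formula of Γ). -/
import Mathlib


set_option autoImplicit true

namespace IPCStmt7

inductive Formula : Type
  | var : ℕ → Formula
  | bot : Formula
  | imp : Formula → Formula → Formula
  | conj : Formula → Formula → Formula
  | disj : Formula → Formula → Formula
  deriving DecidableEq

def Formula.isAtom : Formula → Prop
  | .var _ => True
  | .bot => True
  | _ => False

def Formula.isDisj : Formula → Prop
  | .disj _ _ => True
  | _ => False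

/-- The set `TG(φ)` of targets of `φ`. -/
def TG : Formula → Set Formula
  | .var p => {.var p}
  | .bot => {.bot}
  | .imp _ σ => TG σ
  | .disj τ σ => {.disj τ σ}
  | .conj τ σ => TG τ ∪ TG σ

/-- The family `TR(α, φ)` of traces to `α` in `φ`; each trace is a set of formulas. -/
def TR (α : Formula) : Formula → Set (Set Formula)
  | .var p => if α = .var p then {∅} else ∅
  | .bot => if α = .bot then {∅} else ∅
  | .disj τ σ => if α = .disj τ σ then {∅} else ∅
  | .imp τ σ => {S | ∃ T ∈ TR α σ, S = insert τ T}
  | .conj τ σ => TR α τ ∪ TR α σ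

/-- The subformula relation: `Subf ξ φ` means `ξ` is a subformula of `φ`. -/
inductive Subf : Formula → Formula → Prop
  | refl {φ} : Subf φ φ
  | impL {ξ τ σ} : Subf ξ τ → Subf ξ (.imp τ σ)
  | impR {ξ τ σ} : Subf ξ σ → Subf ξ (.imp τ σ)
  | conjL {ξ τ σ} : Subf ξ τ → Subf ξ (.conj τ σ)
  | conjR {ξ τ σ} : Subf ξ σ → Subf ξ (.conj τ σ)
  | disjL {ξ τ σ} : Subf ξ τ → Subf ξ (.disj τ σ)
  | disjR {ξ τ σ} : Subf ξ σ → Subf ξ (.disj τ σ)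

/-- One recursive call of the Wajsberg algorithm: `WACall (Γ, φ) (Δ, ψ)` means that,
run on the judgement `Γ ⊢ φ`, the algorithm may issue the call `Δ ⊢ ψ`. -/
inductive WACall : Set Formula × Formula → Set Formula × Formula → Prop
  | conj1 {Γ τ σ} : WACall (Γ, .conj τ σ) (Γ, τ)
  | conj2 {Γ τ σ} : WACall (Γ, .conj τ σ) (Γ, σ)
  | imp {Γ τ σ} : WACall (Γ, .imp τ σ) (insert τ Γ, σ)
  | trace {Γ φ ψ α T ρ} :
      (φ.isAtom ∨ φ.isDisj) → ψ ∈ Γ → α ∈ TG ψ →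
      (α.isDisj ∨ α = .bot ∨ ((∃ p, α = .var p) ∧ α = φ)) →
      T ∈ TR α ψ → ρ ∈ T → WACall (Γ, φ) (Γ, ρ)
  | disj1 {Γ φ ψ β γ T} :
      (φ.isAtom ∨ φ.isDisj) → ψ ∈ Γ → .disj β γ ∈ TG ψ →
      T ∈ TR (.disj β γ) ψ → WACall (Γ, φ) (insert β Γ, φ)
  | disj2 {Γ φ ψ β γ T} :
      (φ.isAtom ∨ φ.isDisj) → ψ ∈ Γ → .disj β γ ∈ TG ψ →
      T ∈ TR (.disj β γ) ψ → WACall (Γ, φ) (insert γ Γ, φ)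

theorem Subf.trans {a b c : Formula} (h1 : Subf a b) (h2 : Subf b c) : Subf a c := by
  induction h2 with
  | refl => exact h1
  | impL _ ih => exact .impL ih
  | impR _ ih => exact .impR ih
  | conjL _ ih => exact .conjL ih
  | conjR _ ih => exact .conjR ih
  | disjL _ ih => exact .disjL ih
  | disjR _ ih => exact .disjR ih

theorem TG_subf {α ψ : Formula} (h : α ∈ TG ψ) : Subf α ψ := by
  induction ψ with
  | var p => simp only [TG, Set.mem_singleton_iff] at h; subst h; exact .refl
  | bot => simp only [TG, Set.mem_singleton_iff] at h; subst h; exact .refl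
  | imp τ σ ih1 ih2 => exact .impR (ih2 h)
  | conj τ σ ih1 ih2 =>
    rcases h with h | h
    · exact .conjL (ih1 h)
    · exact .conjR (ih2 h)
  | disj τ σ ih1 ih2 =>
    simp only [TG, Set.mem_singleton_iff] at h; subst h; exact .refl

theorem TR_subf {α ψ ρ : Formula} {T : Set Formula} (hT : T ∈ TR α ψ) (hρ : ρ ∈ T) :
    Subf ρ ψ := by
  induction ψ generalizing T ρ with
  | var p =>
    simp only [TR] at hT; split at hT <;> simp_all
  | bot =>
    simp only [TR] at hT; split at hT <;> simp_all
  | imp τ σ ih1 ih2 =>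
    obtain ⟨S, hS, rfl⟩ := hT
    rcases hρ with rfl | hρ
    · exact .impL .refl
    · exact .impR (ih2 hS hρ)
  | conj τ σ ih1 ih2 =>
    rcases hT with h | h
    · exact .conjL (ih1 h hρ)
    · exact .conjR (ih2 h hρ)
  | disj τ σ ih1 ih2 =>
    simp only [TR] at hT; split at hT <;> simp_all

theorem wacall_step {Γ Δ : Set Formula} {φ ψ : Formula} (h : WACall (Γ, φ) (Δ, ψ)) :
    ∀ ξ : Formula, (ξ ∈ Δ ∨ ξ = ψ) → (Subf ξ φ ∨ ∃ γ ∈ Γ, Subf ξ γ) := by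
  intro ξ hξ
  cases h with
  | conj1 =>
    rcases hξ with hξ | rfl
    · exact .inr ⟨ξ, hξ, .refl⟩
    · exact .inl (.conjL .refl)
  | conj2 =>
    rcases hξ with hξ | rfl
    · exact .inr ⟨ξ, hξ, .refl⟩
    · exact .inl (.conjR .refl)
  | imp =>
    rcases hξ with (rfl | hξ) | rfl
    · exact .inl (.impL .refl)
    · exact .inr ⟨ξ, hξ, .refl⟩
    · exact .inl (.impR .refl)
  | trace h1 h2 h3 h4 h5 h6 =>
    rcases hξ with hξ | rfl
    · exact .inr ⟨ξ, hξ, .refl⟩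
    · exact .inr ⟨_, h2, TR_subf h5 h6⟩
  | disj1 h1 h2 h3 h4 =>
    rcases hξ with (rfl | hξ) | rfl
    · exact .inr ⟨_, h2, Subf.trans (.disjL .refl) (TG_subf h3)⟩
    · exact .inr ⟨ξ, hξ, .refl⟩
    · exact .inl .refl
  | disj2 h1 h2 h3 h4 =>
    rcases hξ with (rfl | hξ) | rfl
    · exact .inr ⟨_, h2, Subf.trans (.disjR .refl) (TG_subf h3)⟩
    · exact .inr ⟨ξ, hξ, .refl⟩
    · exact .inl .refl

theorem wa_aux : ∀ {a b : Set Formula × Formula}, Relation.ReflTransGen WACall a b →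
    ∀ ξ : Formula, (ξ ∈ b.1 ∨ ξ = b.2) → (Subf ξ a.2 ∨ ∃ γ ∈ a.1, Subf ξ γ) := by
  intro a b h
  induction h with
  | refl => rintro ξ (hξ | rfl)
            · exact .inr ⟨ξ, hξ, .refl⟩
            · exact .inl .refl
  | tail _ hstep ih =>
    rename_i b c _
    obtain ⟨Δ', ψ'⟩ := b
    intro ξ hξ
    rcases wacall_step hstep ξ hξ with h | ⟨γ, hγ, hsub⟩
    · rcases ih ψ' (.inr rfl) with h2 | ⟨γ', hγ', h2⟩
      · exact .inl (h.trans h2)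
      · exact .inr ⟨γ', hγ', h.trans h2⟩
    · rcases ih γ (.inl hγ) with h2 | ⟨γ', hγ', h2⟩
      · exact .inl (hsub.trans h2)
      · exact .inr ⟨γ', hγ', hsub.trans h2⟩

/-- subformula property of the Wajsberg algorithm: every formula
occurring in any judgement produced during a run of WA started on `Γ ⊢ φ` is a
subformula of `φ` or of some formula of `Γ`. -/
theorem wajsberg_subformula_property {Γ Δ : Set Formula} {φ ψ : Formula}
    (h : Relation.ReflTransGen WACall (Γ, φ) (Δ, ψ)) :
    ∀ ξ : Formula, (ξ ∈ Δ ∨ ξ = ψ) → (Subf ξ φ ∨ ∃ γ ∈ Γ, Subf ξ γ) :=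
  wa_aux h

end IPCStmt7
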